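/- The unweighted backward shift B on the Hardy space H² = ℓ²(ℕ₀) is chain recurrent but not topologically transitive. -/

import Mathlib

open Filter
open scoped ENNReal

local notation "H" => lp (fun _ : ℕ => ℂ) 2

lemma ht2 : (0:ℝ) < (2:ℝ≥0∞).toReal := by norm_num

/-- forward shift by k -/
noncomputable def fwd (k : ℕ) (x : H) : H :=
  ⟨fun n => if k ≤ n then (x : ℕ → ℂ) (n - k) else 0, by
    apply memℓp_gen
    have hs : Summable fun n : ℕ => ‖(x : ℕ → ℂ) n‖ ^ (2:ℝ≥0∞).toReal :=
      (lp.memℓp x).summable ht2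
    have hinj : Function.Injective (· + k : ℕ → ℕ) := add_left_injective k
    rw [← hinj.summable_iff]
    · refine hs.congr fun j => ?_
      simp
    · intro n hn
      have hk : ¬ k ≤ n := by
        intro hkn
        exact hn ⟨n - k, by simp; omega⟩
      simp [hk, Real.zero_rpow (by norm_num : (2:ℝ≥0∞).toReal ≠ 0)]⟩

lemma fwd_apply (k : ℕ) (x : H) (n : ℕ) :
    (fwd k x : ℕ → ℂ) n = if k ≤ n then (x : ℕ → ℂ) (n - k) else 0 := rfl

lemma fwd_zero (x : H) : fwd 0 x = x := by
  apply lp.ext; funext n; simp [fwd_apply]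

lemma fwd_norm (k : ℕ) (x : H) : ‖fwd k x‖ = ‖x‖ := by
  have h1 := lp.norm_rpow_eq_tsum ht2 (fwd k x)
  have h2 := lp.norm_rpow_eq_tsum ht2 x
  have hinj : Function.Injective (· + k : ℕ → ℕ) := add_left_injective k
  have key : ∑' n : ℕ, ‖(fwd k x : ℕ → ℂ) n‖ ^ (2:ℝ≥0∞).toReal
      = ∑' n : ℕ, ‖(x : ℕ → ℂ) n‖ ^ (2:ℝ≥0∞).toReal := by
    rw [← hinj.tsum_eq]
    · refine tsum_congr fun j => ?_
      simp [fwd_apply]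
    · intro n hn
      by_cases hk : k ≤ n
      · exact ⟨n - k, by simp; omega⟩
      · exfalso
        apply hn
        simp [fwd_apply, hk, Real.zero_rpow (by norm_num : (2:ℝ≥0∞).toReal ≠ 0)]
  have := h1.trans (key.trans h2.symm)
  exact Real.rpow_left_injOn (by norm_num) (lp.norm_nonneg' _) (lp.norm_nonneg' _) this

lemma exists_big : ∃ z : H, 1 < ‖z‖ := by
  refine ⟨lp.single 2 0 (2:ℂ), ?_⟩
  have h := lp.norm_single (E := fun _ : ℕ => ℂ) (p := 2) (by norm_num) 0 (2:ℂ)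
  rw [h]
  norm_num


theorem stmt9 (B : lp (fun _ : ℕ => ℂ) 2 →L[ℂ] lp (fun _ : ℕ => ℂ) 2)
    (hB : ∀ (x : lp (fun _ : ℕ => ℂ) 2) (n : ℕ), (B x : ℕ → ℂ) n = (x : ℕ → ℂ) (n + 1)) :
    (∀ x : lp (fun _ : ℕ => ℂ) 2, ∀ δ > (0 : ℝ),
        ∃ (m : ℕ) (c : ℕ → lp (fun _ : ℕ => ℂ) 2), 1 ≤ m ∧ c 0 = x ∧ c m = x ∧
          ∀ j < m, ‖B (c j) - c (j + 1)‖ ≤ δ) ∧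
    ¬ (∀ U V : Set (lp (fun _ : ℕ => ℂ) 2), IsOpen U → IsOpen V → U.Nonempty → V.Nonempty →
        ∃ n : ℕ, 1 ≤ n ∧ ((⇑B)^[n] '' U ∩ V).Nonempty) := by
  -- coordinates of iterates
  have iter : ∀ (k : ℕ) (y : H) (n : ℕ), ((⇑B)^[k] y : ℕ → ℂ) n = (y : ℕ → ℂ) (n + k) := by
    intro k
    induction k with
    | zero => intro y n; simp
    | succ k ih =>
      intro y n
      rw [Function.iterate_succ_apply, ih, hB]
      exact congrArg (y : ℕ → ℂ) (by omega)
  -- squared norm of iterates as a tail sum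
  have iter_norm : ∀ (k : ℕ) (y : H), ‖(⇑B)^[k] y‖ ^ (2:ℝ≥0∞).toReal
      = ∑' n : ℕ, ‖(y : ℕ → ℂ) (n + k)‖ ^ (2:ℝ≥0∞).toReal := by
    intro k y
    rw [lp.norm_rpow_eq_tsum ht2]
    exact tsum_congr fun n => by rw [iter]
  -- shift intertwining
  have Bfwd : ∀ (k : ℕ) (y : H), B (fwd (k + 1) y) = fwd k y := by
    intro k y
    apply lp.ext
    funext n
    rw [hB, fwd_apply, fwd_apply]
    have : k + 1 ≤ n + 1 ↔ k ≤ n := by omega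
    rcases le_or_gt k n with h | h
    · rw [if_pos (by omega), if_pos h]
      have e : n + 1 - (k + 1) = n - k := by omega
      rw [e]
    · rw [if_neg (by omega), if_neg (by omega)]
  -- squared-norm monotone in the exponent direction
  have sq_le : ∀ a b : ℝ, 0 ≤ a → 0 ≤ b → a ^ (2:ℝ≥0∞).toReal ≤ b ^ (2:ℝ≥0∞).toReal → a ≤ b := by
    intro a b ha hb h
    have h2 : (2:ℝ≥0∞).toReal = ((2:ℕ):ℝ) := by norm_num
    rw [h2, Real.rpow_natCast, Real.rpow_natCast] at h
    exact (pow_le_pow_iff_left₀ ha hb (by norm_num)).mp h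
  constructor
  · -- chain recurrence
    intro x δ hδ
    set t := (2:ℝ≥0∞).toReal with ht
    have hg : Summable fun n : ℕ => ‖(x : ℕ → ℂ) n‖ ^ t := (lp.memℓp x).summable ht2
    -- choose N with tail at N+1 below δ^t
    have htail : Tendsto (fun i : ℕ => ∑' n : ℕ, ‖(x : ℕ → ℂ) (n + i)‖ ^ t) atTop (nhds 0) :=
      tendsto_sum_nat_add (f := fun n : ℕ => ‖(x : ℕ → ℂ) n‖ ^ t)
    have hδt : (0:ℝ) < δ ^ t := Real.rpow_pos_of_pos hδ _
    obtain ⟨N₀, hN₀⟩ := (htail.eventually_lt_const hδt).exists_forall_of_atTop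
    set N := N₀ + 1 with hN
    have hNtail : ‖(⇑B)^[N + 1] x‖ ≤ δ := by
      apply sq_le _ _ (norm_nonneg _) hδ.le
      rw [iter_norm]
      exact (hN₀ (N + 1) (by omega)).le
    -- choose M with ‖x‖ / M ≤ δ
    set M := max 1 ⌈‖x‖ / δ⌉₊ with hM
    have hM1 : 1 ≤ M := le_max_left _ _
    have hMpos : (0:ℝ) < (M:ℝ) := by exact_mod_cast hM1
    have hxM : ‖x‖ / (M:ℝ) ≤ δ := by
      rw [div_le_iff₀ hMpos]
      have h1 : ‖x‖ / δ ≤ (M:ℝ) := le_trans (Nat.le_ceil _) (by exact_mod_cast le_max_right 1 _)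
      calc ‖x‖ = (‖x‖ / δ) * δ := by field_simp
        _ ≤ (M:ℝ) * δ := mul_le_mul_of_nonneg_right h1 hδ.le
        _ = δ * (M:ℝ) := mul_comm _ _
    refine ⟨N + 1 + M, fun j => if j ≤ N then (⇑B)^[j] x
      else (((j - (N+1) : ℕ) : ℂ) / (M:ℂ)) • fwd (M - (j - (N+1))) x, by omega, by simp, ?_, ?_⟩
    · -- c m = x
      have h1 : ¬ N + 1 + M ≤ N := by omega
      have h2 : N + 1 + M - (N + 1) = M := by omega
      simp only [if_neg h1, h2, Nat.sub_self, fwd_zero]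
      rw [div_self (by exact_mod_cast hMpos.ne' : ((M:ℕ):ℂ) ≠ 0), one_smul]
    · intro j hj
      by_cases h1 : j + 1 ≤ N
      · -- pure orbit steps
        simp only [if_pos (by omega : j ≤ N), if_pos h1]
        rw [← Function.iterate_succ_apply' (⇑B) j x]
        simpa using hδ.le
      by_cases h2 : j ≤ N
      · -- the jump to 0: j = N
        have hjN : j = N := by omega
        have h3 : ¬ j + 1 ≤ N := by omega
        have h4 : j + 1 - (N + 1) = 0 := by omega
        simp only [if_pos h2, if_neg h3, h4]
        rw [Nat.cast_zero, zero_div, zero_smul, sub_zero,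
          ← Function.iterate_succ_apply' (⇑B) j x, hjN]
        exact hNtail
      · -- building steps
        set k := j - (N + 1) with hk
        have hkM : k < M := by omega
        have e1 : j - (N + 1) = k := rfl
        have e2 : j + 1 - (N + 1) = k + 1 := by omega
        have e3 : M - k = (M - (k + 1)) + 1 := by omega
        simp only [if_neg h2, if_neg (by omega : ¬ j + 1 ≤ N), e1, e2]
        rw [e3, map_smul, Bfwd]
        rw [← sub_smul]
        rw [norm_smul, fwd_norm]
        have hMC : ((M:ℕ):ℂ) ≠ 0 := by
          exact_mod_cast (show ((M:ℕ):ℝ) ≠ 0 from hMpos.ne')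
        have : ((k:ℂ) / (M:ℂ) - ((k+1:ℕ):ℂ) / (M:ℂ)) = -(1 / (M:ℂ)) := by
          push_cast
          field_simp
          ring
        rw [this]
        have hnorm : ‖-(1 / ((M:ℕ):ℂ))‖ = 1 / (M:ℝ) := by
          rw [norm_neg, norm_div]
          simp
        rw [hnorm]
        calc 1 / (M:ℝ) * ‖x‖ = ‖x‖ / (M:ℝ) := by ring
          _ ≤ δ := hxM
  · -- not topologically transitive
    intro h
    have hcontract : ∀ (n : ℕ) (y : H), ‖(⇑B)^[n] y‖ ≤ ‖y‖ := by
      intro n y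
      apply sq_le _ _ (norm_nonneg _) (norm_nonneg _)
      rw [iter_norm, lp.norm_rpow_eq_tsum ht2]
      refine Summable.tsum_le_tsum_of_inj (fun m : ℕ => m + n) (add_left_injective n)
        (fun c _ => Real.rpow_nonneg (norm_nonneg _) _) (fun m => le_rfl)
        ?_ ((lp.memℓp y).summable ht2)
      have hs : Summable fun m : ℕ => ‖(y : ℕ → ℂ) m‖ ^ (2:ℝ≥0∞).toReal :=
        (lp.memℓp y).summable ht2
      exact hs.comp_injective (add_left_injective n)
    have hVne : ({z : H | 1 < ‖z‖}).Nonempty := exists_big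
    obtain ⟨n, hn, hne⟩ := h (Metric.ball 0 1) {z : H | 1 < ‖z‖}
      Metric.isOpen_ball (isOpen_lt continuous_const continuous_norm)
      ⟨0, Metric.mem_ball_self one_pos⟩ hVne
    obtain ⟨z, hzU, hzV⟩ := hne
    obtain ⟨u, hu, rfl⟩ := hzU
    have h1 : ‖u‖ < 1 := by simpa using hu
    have h2 : 1 < ‖(⇑B)^[n] u‖ := hzV
    exact absurd (lt_of_le_of_lt (hcontract n u) h1) (not_lt.mpr h2.le)
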